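/- Let Φ be a Hermitian-preserving superoperator satisfying KMS detailed balance with respect to Gibbs state γ, i.e. Φ = J_γ ∘ Φ† ∘ J_γ^{-1} where J_γ[X] = √γ X √γ. If Φ[X] = Σ c^{ω,ω̃}_{kl} A_l(ω) X A_k(ω̃)† is its frequency decomposition, then the coefficients satisfy c^{ω,ω̃}_{kl} = conj(c^{-ω,-ω̃}_{kl}) · e^{-β(ω+ω̃)/2}. -/

import Mathlib

open Matrix
open scoped ComplexOrder

/-- **Structural characterization of KMS detailed balanced superoperators.**
Let `γ = γsq * γsq` be a positive definite Gibbs state of the Hermitian matrix `H` at inverse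
temperature `β`, with positive definite square root `γsq`.  Let `A k w` be frequency
components: eigenoperators of `Δ_γ^{1/2}` with `γsq * A k w * γsq⁻¹ = exp(-β ω_w/2) • A k w`,
closed under adjoints via `(A k w)ᴴ = A k (neg w)` where `freq (neg w) = - freq w`, and
linearly independent as sandwich maps.  If `Φ[X] = Σ c^{w,w'}_{kl} A_l(w) X A_k(w')ᴴ` is
Hermitian-preserving, its Hilbert–Schmidt adjoint has the dual expansion
`Φ†[X] = Σ conj(c^{w,w'}_{kl}) A_l(w)ᴴ X A_k(w')`, and `Φ` satisfies KMS detailed balance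
`Φ = J_γ ∘ Φ† ∘ J_γ⁻¹` with `J_γ[X] = √γ X √γ`, then the coefficients satisfy
`c^{w,w'}_{kl} = conj(c^{-w,-w'}_{kl}) · e^{-β(ω_w+ω_{w'})/2}`. -/
theorem kms_detailed_balance_coefficient_characterization {d : ℕ} {ι ΩT : Type*}
    [Fintype ι] [Fintype ΩT]
    (β : ℝ) (H : Matrix (Fin d) (Fin d) ℂ) (hH : H.IsHermitian)
    (γ γsq : Matrix (Fin d) (Fin d) ℂ) (hγ : γ.PosDef) (hγsq : γsq.PosDef)
    (hsq : γsq * γsq = γ)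
    (hγdef : γ = ((NormedSpace.exp ((-β : ℂ) • H)).trace)⁻¹ • NormedSpace.exp ((-β : ℂ) • H))
    (freq : ΩT → ℝ) (hfreq : Function.Injective freq)
    (neg : ΩT → ΩT) (hneg : ∀ w, freq (neg w) = -freq w)
    (A : ι → ΩT → Matrix (Fin d) (Fin d) ℂ)
    (heig : ∀ k w, γsq * A k w * γsq⁻¹ = Complex.exp (-(β * freq w) / 2) • A k w)
    (hconjA : ∀ k w, (A k w)ᴴ = A k (neg w))
    (hindep : ∀ c' : ι → ι → ΩT → ΩT → ℂ,
      (∀ X : Matrix (Fin d) (Fin d) ℂ,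
        ∑ k, ∑ l, ∑ w, ∑ w', c' k l w w' • (A l w * X * (A k w')ᴴ) = 0) →
      ∀ k l w w', c' k l w w' = 0)
    (c : ι → ι → ΩT → ΩT → ℂ)
    (Φ Φadj : Matrix (Fin d) (Fin d) ℂ →ₗ[ℂ] Matrix (Fin d) (Fin d) ℂ)
    (hrep : ∀ X : Matrix (Fin d) (Fin d) ℂ,
      Φ X = ∑ k, ∑ l, ∑ w, ∑ w', c k l w w' • (A l w * X * (A k w')ᴴ))
    (hadj : ∀ P Q : Matrix (Fin d) (Fin d) ℂ,
      (Pᴴ * Φ Q).trace = ((Φadj P)ᴴ * Q).trace)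
    (hadjrep : ∀ X : Matrix (Fin d) (Fin d) ℂ,
      Φadj X = ∑ k, ∑ l, ∑ w, ∑ w', star (c k l w w') • ((A l w)ᴴ * X * A k w'))
    (hherm : ∀ X : Matrix (Fin d) (Fin d) ℂ, Φ Xᴴ = (Φ X)ᴴ)
    (hKMS : ∀ X : Matrix (Fin d) (Fin d) ℂ,
      Φ X = γsq * Φadj (γsq⁻¹ * X * γsq⁻¹) * γsq) :
    ∀ k l w w', c k l w w'
      = star (c k l (neg w) (neg w')) * Complex.exp (-(β * (freq w + freq w')) / 2) := by
  classical
  have hdet : IsUnit γsq.det := (Matrix.isUnit_iff_isUnit_det _).mp hγsq.isUnit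
  have hinv1 : γsq⁻¹ * γsq = 1 := Matrix.nonsing_inv_mul _ hdet
  have hinv2 : γsq * γsq⁻¹ = 1 := Matrix.mul_nonsing_inv _ hdet
  have hnn : ∀ u, neg (neg u) = u := fun u => hfreq (by rw [hneg, hneg]; ring)
  have heig' : ∀ k u, γsq⁻¹ * A k u * γsq
      = Complex.exp (-(β * freq (neg u)) / 2) • A k u := by
    intro k u
    have e1 : γsq⁻¹ * (γsq * A k u * γsq⁻¹) * γsq = A k u := by
      calc γsq⁻¹ * (γsq * A k u * γsq⁻¹) * γsq
          = (γsq⁻¹ * γsq) * (A k u * (γsq⁻¹ * γsq)) := by simp only [mul_assoc]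
        _ = A k u := by rw [hinv1, one_mul, mul_one]
    have e2 : γsq⁻¹ * (γsq * A k u * γsq⁻¹) * γsq
        = Complex.exp (-(β * freq u) / 2) • (γsq⁻¹ * A k u * γsq) := by
      rw [heig k u, Matrix.mul_smul, Matrix.smul_mul]
    have e3 : A k u = Complex.exp (-(β * freq u) / 2) • (γsq⁻¹ * A k u * γsq) := by
      conv_lhs => rw [← e1]
      exact e2
    have hne : Complex.exp (-(β * freq u) / 2) ≠ 0 := Complex.exp_ne_zero _
    rw [hneg]
    have hexp : Complex.exp (-(β * (-freq u : ℝ)) / 2)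
        = (Complex.exp (-(β * freq u) / 2))⁻¹ := by
      rw [← Complex.exp_neg]; congr 1; push_cast; ring
    rw [hexp, eq_inv_smul_iff₀ hne]
    exact e3.symm
  intro k l w w'
  have main := hindep (fun k l w w' => c k l w w'
      - star (c k l (neg w) (neg w')) * Complex.exp (-(β * (freq w + freq w')) / 2)) ?_ k l w w'
  · exact sub_eq_zero.mp main
  · intro X
    have key : ∀ (kk ll : ι) (u u' : ΩT),
        γsq * (star (c kk ll u u') • ((A ll u)ᴴ * (γsq⁻¹ * X * γsq⁻¹) * A kk u')) * γsq
        = (star (c kk ll (neg (neg u)) (neg (neg u'))) *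
            Complex.exp (-(β * (freq (neg u) + freq (neg u'))) / 2))
          • (A ll (neg u) * X * (A kk (neg u'))ᴴ) := by
      intro kk ll u u'
      rw [hnn, hnn]
      have h1 : γsq * (A ll u)ᴴ * γsq⁻¹
          = Complex.exp (-(β * freq (neg u)) / 2) • A ll (neg u) := by
        rw [hconjA]; exact heig ll (neg u)
      have h2 : γsq⁻¹ * A kk u' * γsq
          = Complex.exp (-(β * freq (neg u')) / 2) • A kk u' := heig' kk u'
      have h3 : A kk u' = (A kk (neg u'))ᴴ := by rw [hconjA, hnn]
      have hassoc : γsq * ((A ll u)ᴴ * (γsq⁻¹ * X * γsq⁻¹) * A kk u') * γsq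
          = (γsq * (A ll u)ᴴ * γsq⁻¹) * X * (γsq⁻¹ * A kk u' * γsq) := by
        simp only [mul_assoc]
      rw [Matrix.mul_smul, Matrix.smul_mul, hassoc, h1, h2, h3]
      simp only [Matrix.smul_mul, Matrix.mul_smul, smul_smul]
      rw [← Complex.exp_add]
      congr 3
      push_cast
      ring
    have hPhi2 : Φ X = ∑ kk, ∑ ll, ∑ u, ∑ u',
        (star (c kk ll (neg u) (neg u')) * Complex.exp (-(β * (freq u + freq u')) / 2))
          • (A ll u * X * (A kk u')ᴴ) := by
      rw [hKMS X, hadjrep]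
      simp only [Finset.mul_sum, Finset.sum_mul]
      refine Fintype.sum_congr _ _ fun kk => Fintype.sum_congr _ _ fun ll => ?_
      refine Fintype.sum_equiv (Function.Involutive.toPerm neg hnn) _ _ fun u => ?_
      refine Fintype.sum_equiv (Function.Involutive.toPerm neg hnn) _ _ fun u' => ?_
      dsimp only [Function.Involutive.toPerm, Equiv.coe_fn_mk]
      simpa using key kk ll u u'
    calc ∑ kk, ∑ ll, ∑ u, ∑ u',
          (c kk ll u u'
            - star (c kk ll (neg u) (neg u')) * Complex.exp (-(β * (freq u + freq u')) / 2))
            • (A ll u * X * (A kk u')ᴴ)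
        = (∑ kk, ∑ ll, ∑ u, ∑ u', c kk ll u u' • (A ll u * X * (A kk u')ᴴ))
          - ∑ kk, ∑ ll, ∑ u, ∑ u',
            (star (c kk ll (neg u) (neg u')) * Complex.exp (-(β * (freq u + freq u')) / 2))
              • (A ll u * X * (A kk u')ᴴ) := by
          simp [sub_smul, Finset.sum_sub_distrib]
      _ = Φ X - Φ X := by rw [← hrep, ← hPhi2]
      _ = 0 := sub_self _
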